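/- Let R be a finite ring with q elements, let Γ be a nonempty finite index set with N = |Γ|, let M be a natural number, and let k = (k_α)_{α ∈ R∖{0}} be a family of natural numbers satisfying ∑_{α ∈ R∖{0}} α·k_α = 0 in R (where α·k denotes α added to itself k times) and ∑_{α ∈ R∖{0}} k_α ≤ N. Suppose for each α ∈ R∖{0} we are given nonnegative integers (x_i^{(α)})_{i ∈ Γ} such that (a) ∑_{i ∈ Γ} x_i^{(α)} = k_α · M for every α ∈ R∖{0}, and (b) ∑_{α ∈ R∖{0}} x_i^{(α)} ≤ M for every i ∈ Γ. Then there exist nonnegative integers (w_a)_{a ∈ C_Γ^{(k)}} such that (1) ∑_{a ∈ C_Γ^{(k)}} w_a = M, and (2) for all α ∈ R∖{0} and all i ∈ Γ, x_i^{(α)} = ∑_{a ∈ C_Γ^{(k)}, a_i = α} w_a. -/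

import Mathlib

open Finset

/-- The single-parity-check code over index set `Γ` with prescribed composition `k`:
all vectors `a : Γ → R` with `∑ i, a i = 0` such that, for each nonzero `α ∈ R`,
exactly `k α` coordinates of `a` equal `α`. -/
def Ckf {R : Type*} [Ring R] [Fintype R] [DecidableEq R]
    {Γ : Type*} [Fintype Γ] [DecidableEq Γ]
    (k : {α : R // α ≠ 0} → ℕ) : Finset (Γ → R) :=
  Finset.univ.filter (fun a => (∑ i, a i = 0) ∧
    ∀ α : {α : R // α ≠ 0}, (Finset.univ.filter (fun i => a i = (α : R))).card = k α)

/-- Decomposition lemma without the ring structure: a nonnegative integer matrix with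
all row sums `M` and column sums `c α * M` decomposes into `M` constant-composition
"pattern" functions. -/
lemma key_decomp {R : Type*} [Fintype R] [DecidableEq R]
    {Γ : Type*} [Fintype Γ] [DecidableEq Γ]
    (c : R → ℕ) (hc : ∑ α, c α = Fintype.card Γ) :
    ∀ (M : ℕ) (y : Γ → R → ℕ),
      (∀ i, ∑ α, y i α = M) → (∀ α, ∑ i, y i α = c α * M) →
      ∃ w : (Γ → R) → ℕ,
        (∑ a ∈ univ.filter (fun a : Γ → R =>
            ∀ α, (univ.filter (fun i => a i = α)).card = c α), w a = M) ∧
        ∀ α i, y i α = ∑ a ∈ (univ.filter (fun a : Γ → R =>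
            ∀ α, (univ.filter (fun i => a i = α)).card = c α)).filter
              (fun a => a i = α), w a := by
  intro M
  induction M with
  | zero =>
    intro y hr _
    refine ⟨fun _ => 0, by simp, fun α i => ?_⟩
    have : y i α = 0 := by
      have := hr i
      have h1 : y i α ≤ ∑ β, y i β := Finset.single_le_sum (fun _ _ => Nat.zero_le _) (mem_univ α)
      omega
    simp [this]
  | succ M IH =>
    intro y hr hcol
    -- Hall's theorem setup
    set t : Γ → Finset (Σ α : R, Fin (c α)) :=
      fun i => univ.filter (fun p => 1 ≤ y i p.1) with ht
    have hall : ∀ S : Finset Γ, S.card ≤ (S.biUnion t).card := by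
      intro S
      set A : Finset R := univ.filter (fun α => ∃ i ∈ S, 1 ≤ y i α) with hA
      have hB : S.biUnion t = A.sigma (fun α => (univ : Finset (Fin (c α)))) := by
        ext p
        rw [Finset.mem_sigma, mem_biUnion]
        simp only [ht, mem_filter, mem_univ, true_and, hA, and_true]
      have hBcard : (S.biUnion t).card = ∑ α ∈ A, c α := by
        rw [hB, Finset.card_sigma]; simp
      have hmul : S.card * (M + 1) ≤ (∑ α ∈ A, c α) * (M + 1) := by
        calc S.card * (M + 1) = ∑ i ∈ S, ∑ α : R, y i α := by
              rw [Finset.sum_congr rfl (fun i _ => hr i), Finset.sum_const, smul_eq_mul]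
          _ = ∑ α : R, ∑ i ∈ S, y i α := Finset.sum_comm
          _ = ∑ α ∈ A, ∑ i ∈ S, y i α := by
              refine (Finset.sum_subset (Finset.subset_univ A) ?_).symm
              intro α _ hα
              simp only [hA, mem_filter, mem_univ, true_and, not_exists, not_and] at hα
              refine Finset.sum_eq_zero (fun i hi => ?_)
              have := hα i hi
              omega
          _ ≤ ∑ α ∈ A, c α * (M + 1) := by
              refine Finset.sum_le_sum (fun α _ => ?_)
              rw [← hcol α]
              exact Finset.sum_le_sum_of_subset (Finset.subset_univ S)
          _ = (∑ α ∈ A, c α) * (M + 1) := (Finset.sum_mul _ _ _).symm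
      rw [hBcard]
      exact Nat.le_of_mul_le_mul_right hmul (Nat.succ_pos M)
    obtain ⟨f, hfinj, hfmem⟩ :=
      (Finset.all_card_le_biUnion_card_iff_existsInjective' t).mp hall
    set a₀ : Γ → R := fun i => (f i).1 with ha₀
    have hy1 : ∀ i, 1 ≤ y i (a₀ i) := by
      intro i
      have := hfmem i
      simpa [ht] using this
    -- the composition of a₀ is exactly c
    have hle : ∀ α, (univ.filter (fun i => a₀ i = α)).card ≤ c α := by
      intro α
      have : (univ.filter (fun i => a₀ i = α)).card ≤
          ((univ : Finset (Σ β : R, Fin (c β))).filter (fun p => p.1 = α)).card := by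
        refine Finset.card_le_card_of_injOn f ?_ hfinj.injOn
        intro i hi
        simp only [Finset.coe_filter, Set.mem_setOf_eq, mem_coe, mem_filter, mem_univ, true_and] at hi ⊢
        exact hi
      refine this.trans_eq ?_
      have : ((univ : Finset (Σ β : R, Fin (c β))).filter (fun p => p.1 = α)) =
          ({α} : Finset R).sigma (fun β => (univ : Finset (Fin (c β)))) := by
        ext p
        rw [Finset.mem_sigma]
        simp
      rw [this, Finset.card_sigma]; simp
    have hsum : ∑ α, (univ.filter (fun i => a₀ i = α)).card = ∑ α, c α := by
      rw [hc]
      exact (Finset.card_eq_sum_card_fiberwise (f := a₀) (s := univ) (t := univ)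
        (fun _ _ => mem_univ _)).symm
    have hcount : ∀ α, (univ.filter (fun i => a₀ i = α)).card = c α := by
      intro α
      exact (Finset.sum_eq_sum_iff_of_le (fun β _ => hle β)).mp hsum α (mem_univ α)
    -- subtract the pattern
    set y' : Γ → R → ℕ := fun i α => y i α - (if a₀ i = α then 1 else 0) with hy'
    have hind_le : ∀ i α, (if a₀ i = α then 1 else 0) ≤ y i α := by
      intro i α
      split
      · next h => rw [← h]; exact hy1 i
      · exact Nat.zero_le _
    have hr' : ∀ i, ∑ α, y' i α = M := by
      intro i
      rw [hy']
      rw [Finset.sum_tsub_distrib _ (fun α _ => hind_le i α), hr i]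
      simp
    have hcol' : ∀ α, ∑ i, y' i α = c α * M := by
      intro α
      rw [hy']
      rw [Finset.sum_tsub_distrib _ (fun i _ => hind_le i α), hcol α]
      have : ∑ i : Γ, (if a₀ i = α then 1 else 0) = c α := by
        rw [← hcount α, Finset.card_filter]
      rw [this, Nat.mul_succ]
      omega
    obtain ⟨w', hw1, hw2⟩ := IH y' hr' hcol'
    set D := univ.filter (fun a : Γ → R =>
        ∀ α, (univ.filter (fun i => a i = α)).card = c α) with hD
    have ha₀D : a₀ ∈ D := by simp [hD, hcount]
    refine ⟨fun a => w' a + (if a = a₀ then 1 else 0), ?_, ?_⟩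
    · rw [Finset.sum_add_distrib, hw1, Finset.sum_ite_eq' D a₀ (fun _ => 1), if_pos ha₀D]
    · intro α i
      have hyy : y i α = y' i α + (if a₀ i = α then 1 else 0) := by
        rw [hy']
        exact (Nat.sub_add_cancel (hind_le i α)).symm
      rw [hyy, hw2 α i, Finset.sum_add_distrib]
      congr 1
      rw [Finset.sum_ite_eq' _ a₀ (fun _ => 1)]
      by_cases h : a₀ i = α
      · rw [if_pos h, if_pos (by simp [mem_filter, ha₀D, h])]
      · rw [if_neg h, if_neg (by simp [mem_filter, h])]

lemma sum_split_zero {R : Type*} [Fintype R] [DecidableEq R] [Zero R]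
    {β : Type*} [AddCommMonoid β] (g : R → β) :
    ∑ α : R, g α = g 0 + ∑ α : {α : R // α ≠ 0}, g α := by
  rw [← Finset.sum_subtype (univ.erase (0 : R)) (fun x => by simp) g]
  exact (Finset.add_sum_erase univ g (mem_univ 0)).symm

/-- **Proposition 1.** Given nonnegative integers `x i α` with column sums `k α * M`
and row sums at most `M`, there exist nonnegative integer weights `w a` on the
constant-composition single-parity-check code `C_Γ^{(k)}` summing to `M` and
recovering each `x i α` as the total weight of codewords with `a i = α`. -/
theorem proposition_1 {R : Type*} [Ring R] [Fintype R] [DecidableEq R]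
    {Γ : Type*} [Fintype Γ] [DecidableEq Γ] [Nonempty Γ]
    (M : ℕ) (k : {α : R // α ≠ 0} → ℕ)
    (hk0 : ∑ α : {α : R // α ≠ 0}, (k α) • (α : R) = 0)
    (hkN : ∑ α : {α : R // α ≠ 0}, k α ≤ Fintype.card Γ)
    (x : Γ → {α : R // α ≠ 0} → ℕ)
    (hx1 : ∀ α : {α : R // α ≠ 0}, ∑ i : Γ, x i α = k α * M)
    (hx2 : ∀ i : Γ, ∑ α : {α : R // α ≠ 0}, x i α ≤ M) :
    ∃ w : (Γ → R) → ℕ,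
      (∑ a ∈ Ckf (Γ := Γ) k, w a = M) ∧
      ∀ α : {α : R // α ≠ 0}, ∀ i : Γ,
        x i α = ∑ a ∈ (Ckf (Γ := Γ) k).filter (fun a => a i = (α : R)), w a := by
  classical
  set S := ∑ β : {α : R // α ≠ 0}, k β with hS
  set c : R → ℕ := fun α => if h : α = 0 then Fintype.card Γ - S else k ⟨α, h⟩ with hcdef
  have hc0 : c 0 = Fintype.card Γ - S := by simp [hcdef]
  have hcne : ∀ (α : R) (h : α ≠ 0), c α = k ⟨α, h⟩ := fun α h => dif_neg h
  have hcsub : ∀ α : {α : R // α ≠ 0}, c ↑α = k α := by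
    intro α; rw [hcne _ α.2]
  have hc : ∑ α : R, c α = Fintype.card Γ := by
    rw [sum_split_zero c, hc0]
    have : ∑ α : {α : R // α ≠ 0}, c ↑α = S := by
      rw [hS]; exact Finset.sum_congr rfl (fun α _ => hcsub α)
    rw [this]; omega
  set y : Γ → R → ℕ := fun i α =>
    if h : α = 0 then M - ∑ β : {α : R // α ≠ 0}, x i β else x i ⟨α, h⟩ with hydef
  have hy0 : ∀ i, y i 0 = M - ∑ β : {α : R // α ≠ 0}, x i β := by intro i; simp [hydef]
  have hysub : ∀ i (α : {α : R // α ≠ 0}), y i ↑α = x i α := by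
    intro i α; simp only [hydef]; rw [dif_neg α.2]
  have hr : ∀ i, ∑ α : R, y i α = M := by
    intro i
    rw [sum_split_zero (y i), hy0 i]
    have : ∑ α : {α : R // α ≠ 0}, y i ↑α = ∑ β : {α : R // α ≠ 0}, x i β :=
      Finset.sum_congr rfl (fun α _ => hysub i α)
    rw [this]
    have := hx2 i
    omega
  have hcol : ∀ α : R, ∑ i, y i α = c α * M := by
    intro α
    by_cases h : α = 0
    · subst h
      have h1 : ∀ i ∈ (univ : Finset Γ), ∑ β : {α : R // α ≠ 0}, x i β ≤ M :=
        fun i _ => hx2 i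
      calc ∑ i, y i 0 = ∑ i : Γ, (M - ∑ β : {α : R // α ≠ 0}, x i β) :=
            Finset.sum_congr rfl (fun i _ => hy0 i)
        _ = (∑ _i : Γ, M) - ∑ i : Γ, ∑ β : {α : R // α ≠ 0}, x i β :=
            Finset.sum_tsub_distrib _ h1
        _ = Fintype.card Γ * M - S * M := by
            have e1 : (∑ _i : Γ, M) = Fintype.card Γ * M := by
              rw [Finset.sum_const, smul_eq_mul, Finset.card_univ]
            have e2 : ∑ i : Γ, ∑ β : {α : R // α ≠ 0}, x i β = S * M := by
              rw [Finset.sum_comm, hS, Finset.sum_mul]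
              exact Finset.sum_congr rfl (fun β _ => hx1 β)
            rw [e1, e2]
        _ = c 0 * M := by rw [hc0, Nat.sub_mul]
    · calc ∑ i, y i α = ∑ i, x i ⟨α, h⟩ :=
            Finset.sum_congr rfl (fun i _ => hysub i ⟨α, h⟩)
        _ = k ⟨α, h⟩ * M := hx1 _
        _ = c α * M := by rw [hcne α h]
  obtain ⟨w, hw1, hw2⟩ := key_decomp c hc M y hr hcol
  have hDC : univ.filter (fun a : Γ → R =>
      ∀ α, (univ.filter (fun i => a i = α)).card = c α) = Ckf (Γ := Γ) k := by
    ext a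
    simp only [Ckf, mem_filter, mem_univ, true_and]
    have hpart : ∑ α : R, (univ.filter (fun i => a i = α)).card = Fintype.card Γ :=
      (Finset.card_eq_sum_card_fiberwise (f := a) (s := univ) (t := univ)
        (fun _ _ => mem_univ _)).symm
    have hsum_eq : ∑ i : Γ, a i =
        ∑ α : R, (univ.filter (fun i => a i = α)).card • α := by
      rw [← Finset.sum_fiberwise_of_maps_to (fun i (_ : i ∈ univ) => mem_univ (a i)) a]
      refine Finset.sum_congr rfl (fun α _ => ?_)
      calc ∑ i ∈ univ.filter (fun i => a i = α), a i
          = ∑ _i ∈ univ.filter (fun i => a i = α), α := by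
            refine Finset.sum_congr rfl (fun i hi => ?_)
            simp only [mem_filter] at hi
            simp [hi.2]
        _ = (univ.filter (fun i => a i = α)).card • α := Finset.sum_const α
    constructor
    · intro h
      refine ⟨?_, fun α => by rw [h ↑α, hcsub]⟩
      rw [hsum_eq, sum_split_zero (fun α => (univ.filter (fun i => a i = α)).card • α)]
      simp only [smul_zero, zero_add]
      calc ∑ α : {α : R // α ≠ 0}, (univ.filter (fun i => a i = ↑α)).card • (α : R)
          = ∑ α : {α : R // α ≠ 0}, (k α) • (α : R) := by
            refine Finset.sum_congr rfl (fun α _ => ?_)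
            rw [h ↑α, hcsub]
        _ = 0 := hk0
    · rintro ⟨hzero, hcnt⟩ α
      by_cases h : α = 0
      · subst h
        have h1 : ∑ α : {α : R // α ≠ 0}, (univ.filter (fun i => a i = (α : R))).card = S := by
          rw [hS]; exact Finset.sum_congr rfl (fun α _ => hcnt α)
        have h2 : (univ.filter (fun i => a i = (0 : R))).card + S = Fintype.card Γ := by
          rw [← h1]
          exact (sum_split_zero
            (fun α : R => (univ.filter (fun i => a i = α)).card)).symm.trans hpart
        rw [hc0]
        exact Nat.eq_sub_of_add_eq h2
      · rw [hcne α h]; exact hcnt ⟨α, h⟩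
  rw [hDC] at hw1
  refine ⟨w, hw1, fun α i => ?_⟩
  rw [← hysub i α, hw2 ↑α i, hDC]
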